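/- The uniform matroid U_{2,4} is not 2-entropic: there is no probability distribution μ on {0,1}^4 with random variables X_1,…,X_4 such that H(X_i) = 1 for all i, H(X_i, X_j) = 2 for all i ≠ j, and H(X_1, X_2, X_3, X_4) = 2, where H is Shannon entropy in base 2. -/

import Mathlib

open scoped Classical BigOperators

/-- Shannon entropy in base `q` of a probability mass function on a finite type. -/
noncomputable def shannonEntropy {α : Type*} [Fintype α] (q : ℝ) (μ : PMF α) : ℝ :=
  -∑ x : α, (μ x).toReal * Real.logb q (μ x).toReal

/-- Marginal of a distribution on `ι → α` on the coordinates in `S`. -/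
noncomputable def marg {ι α : Type*} (μ : PMF (ι → α)) (S : Finset ι) :
    PMF ({ i // i ∈ S } → α) :=
  μ.map fun x i => x i.1

private lemma sum_toReal_pmf {γ : Type*} [Fintype γ] (ν : PMF γ) :
    ∑ y, (ν y).toReal = 1 := by
  have h := ν.tsum_coe
  rw [tsum_fintype] at h
  rw [← ENNReal.toReal_sum (fun a _ => ν.apply_ne_top a), h, ENNReal.toReal_one]

private lemma map_toReal {α β : Type*} [Fintype α] [DecidableEq β] (μ : PMF α)
    (f : α → β) (b : β) :
    ((μ.map f) b).toReal = ∑ x ∈ Finset.univ.filter (fun x => f x = b), (μ x).toReal := by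
  rw [PMF.map_apply, tsum_fintype,
    ENNReal.toReal_sum (fun a _ => by split <;> simp [PMF.apply_ne_top]),
    Finset.sum_filter]
  refine Finset.sum_congr rfl fun x _ => ?_
  by_cases h : f x = b
  · simp [h]
  · rw [if_neg (fun he => h he.symm)]
    simp [h]

private lemma map_toReal_inj {α β : Type*} (μ : PMF α) {f : α → β}
    (hf : Function.Injective f) (x : α) : ((μ.map f) (f x)).toReal = (μ x).toReal := by
  rw [PMF.map_apply]
  rw [tsum_eq_single x (fun b hb => if_neg (fun h => hb ((hf h).symm)))]
  simp

private lemma xlog_ge (t : ℝ) (ht : 0 ≤ t) : t - 1 ≤ t * Real.log t := by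
  rcases eq_or_lt_of_le ht with h | h
  · simp [← h]
  · have := Real.log_le_sub_one_of_pos (inv_pos.2 h)
    rw [Real.log_inv] at this
    nlinarith [mul_le_mul_of_nonneg_left this (le_of_lt h), mul_inv_cancel₀ (ne_of_gt h)]
private lemma xlog_eq (t : ℝ) (ht : 0 ≤ t) (he : t * Real.log t = t - 1) :
    t = 0 ∨ t = 1 := by
  rcases eq_or_lt_of_le ht with h | h
  · exact Or.inl h.symm
  · by_contra hc
    push_neg at hc
    have := Real.log_lt_sub_one_of_pos (inv_pos.2 h) (by
      simp only [ne_eq, inv_eq_one]; exact hc.2)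
    rw [Real.log_inv] at this
    nlinarith [mul_lt_mul_of_pos_left this h, mul_inv_cancel₀ (ne_of_gt h)]

private lemma maxEnt {β : Type*} [Fintype β] (q : β → ℝ) (h0 : ∀ y, 0 ≤ q y)
    (h1 : ∑ y, q y = 1)
    (hH : -∑ y, q y * Real.logb 2 (q y) = Real.logb 2 (Fintype.card β)) :
    ∀ y, q y = 1 / (Fintype.card β : ℝ) := by
  have hcard : (0 : ℝ) < (Fintype.card β : ℝ) := by
    have : Fintype.card β ≠ 0 := by
      intro h
      have : IsEmpty β := Fintype.card_eq_zero_iff.mp h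
      simp [Finset.sum_of_isEmpty] at h1
    exact_mod_cast Nat.pos_of_ne_zero this
  set n : ℝ := (Fintype.card β : ℝ) with hn
  have hl2 : (0:ℝ) < Real.log 2 := Real.log_pos (by norm_num)
  have hlog : ∑ y, q y * Real.log (q y) = -Real.log n := by
    simp only [Real.logb] at hH
    have e : ∑ y, q y * (Real.log (q y) / Real.log 2)
        = (∑ y, q y * Real.log (q y)) / Real.log 2 := by
      rw [Finset.sum_div]; exact Finset.sum_congr rfl fun y _ => by ring
    rw [e] at hH
    field_simp at hH
    exact mul_right_cancel₀ (ne_of_gt hl2) (by rw [← hH]; ring)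
  have hterm : ∀ y, (n * q y) * Real.log (n * q y)
      = n * q y * Real.log n + n * (q y * Real.log (q y)) := by
    intro y
    rcases eq_or_lt_of_le (h0 y) with h | h
    · simp [← h]
    · rw [Real.log_mul (ne_of_gt hcard) (ne_of_gt h)]; ring
  have hsum0 : ∑ y, ((n * q y) * Real.log (n * q y) - (n * q y - 1)) = 0 := by
    have e1 : ∑ y, ((n * q y) * Real.log (n * q y) - (n * q y - 1))
        = ∑ y, (n * q y * Real.log n + n * (q y * Real.log (q y)) - (n * q y - 1)) :=
      Finset.sum_congr rfl fun y _ => by rw [hterm y]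
    rw [e1]
    simp only [Finset.sum_sub_distrib, Finset.sum_add_distrib, ← Finset.mul_sum,
      ← Finset.sum_mul]
    rw [hlog, h1, Finset.sum_const, Finset.card_univ, nsmul_eq_mul, mul_one]
    ring
  have hzero : ∀ y, (n * q y) * Real.log (n * q y) - (n * q y - 1) = 0 := by
    intro y
    have := (Finset.sum_eq_zero_iff_of_nonneg (fun y _ => by
      have := xlog_ge (n * q y) (mul_nonneg (le_of_lt hcard) (h0 y)); linarith)).mp hsum0
    exact this y (Finset.mem_univ y)
  have hdich : ∀ y, q y = 0 ∨ q y = 1 / n := by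
    intro y
    rcases xlog_eq (n * q y) (mul_nonneg (le_of_lt hcard) (h0 y))
        (by linarith [hzero y]) with h | h
    · left
      rcases mul_eq_zero.mp h with h | h
      · exact absurd h (ne_of_gt hcard)
      · exact h
    · right
      rw [eq_div_iff (ne_of_gt hcard)]
      linear_combination h
  intro y
  rcases hdich y with h | h
  · exfalso
    have hle : ∀ z, q z ≤ 1 / n := by
      intro z; rcases hdich z with h' | h' <;> rw [h'] <;> positivity
    have hs1 : ∑ z ∈ Finset.univ.erase y, q z = 1 := by
      rw [← h1, ← Finset.add_sum_erase _ _ (Finset.mem_univ y), h, zero_add]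
    have hb : ∑ z ∈ Finset.univ.erase y, q z
        ≤ (Finset.univ.erase y).card • (1 / n) :=
      Finset.sum_le_card_nsmul _ _ _ (fun z _ => hle z)
    rw [Finset.card_erase_of_mem (Finset.mem_univ y), Finset.card_univ, nsmul_eq_mul] at hb
    have hc1 : 1 ≤ Fintype.card β := Fintype.card_pos_iff.mpr ⟨y⟩
    have hcast : ((Fintype.card β - 1 : ℕ) : ℝ) * (1 / n) = 1 - 1 / n := by
      rw [Nat.cast_sub hc1]
      push_cast
      rw [← hn]
      field_simp
    rw [hcast] at hb
    have : (0:ℝ) < 1 / n := by positivity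
    linarith
  · exact h

private lemma grouping {α β : Type*} [Fintype α] [Fintype β] [DecidableEq β]
    (p : α → ℝ) (π : α → β) (h0 : ∀ x, 0 ≤ p x)
    (hH : ∑ x, p x * Real.logb 2 (p x)
        = ∑ y, (∑ x ∈ Finset.univ.filter (fun x => π x = y), p x)
            * Real.logb 2 (∑ x ∈ Finset.univ.filter (fun x => π x = y), p x)) :
    ∀ x, p x = 0 ∨ p x = ∑ x' ∈ Finset.univ.filter (fun x' => π x' = π x), p x' := by
  set m : β → ℝ := fun y => ∑ x ∈ Finset.univ.filter (fun x => π x = y), p x with hm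
  have hpm : ∀ x, p x ≤ m (π x) := by
    intro x
    exact Finset.single_le_sum (fun x' _ => h0 x')
      (Finset.mem_filter.mpr ⟨Finset.mem_univ x, rfl⟩)
  have e : ∑ y, m y * Real.logb 2 (m y) = ∑ x, p x * Real.logb 2 (m (π x)) := by
    have e1 : ∀ y, m y * Real.logb 2 (m y)
        = ∑ x ∈ Finset.univ.filter (fun x => π x = y), p x * Real.logb 2 (m (π x)) := by
      intro y
      rw [hm]
      rw [Finset.sum_mul]
      exact Finset.sum_congr rfl fun x hx => by
        rw [(Finset.mem_filter.mp hx).2]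
    calc ∑ y, m y * Real.logb 2 (m y)
        = ∑ y, ∑ x ∈ Finset.univ.filter (fun x => π x = y),
            p x * Real.logb 2 (m (π x)) := Finset.sum_congr rfl fun y _ => e1 y
      _ = ∑ x, p x * Real.logb 2 (m (π x)) := by
          rw [Finset.sum_fiberwise_eq_sum_filter]
          simp
  have hd : ∑ x, p x * (Real.logb 2 (m (π x)) - Real.logb 2 (p x)) = 0 := by
    have : ∑ x, p x * (Real.logb 2 (m (π x)) - Real.logb 2 (p x))
        = ∑ x, p x * Real.logb 2 (m (π x)) - ∑ x, p x * Real.logb 2 (p x) := by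
      rw [← Finset.sum_sub_distrib]
      exact Finset.sum_congr rfl fun x _ => by ring
    rw [this, ← e, hH, sub_self]
  have hnn : ∀ x, 0 ≤ p x * (Real.logb 2 (m (π x)) - Real.logb 2 (p x)) := by
    intro x
    rcases eq_or_lt_of_le (h0 x) with h | h
    · simp [← h]
    · have hl := Real.logb_le_logb_of_le (by norm_num : (1:ℝ) < 2) h (hpm x)
      nlinarith
  intro x
  have hz : p x * (Real.logb 2 (m (π x)) - Real.logb 2 (p x)) = 0 :=
    (Finset.sum_eq_zero_iff_of_nonneg (fun x _ => hnn x)).mp hd x (Finset.mem_univ x)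
  rcases eq_or_lt_of_le (h0 x) with h | h
  · exact Or.inl h.symm
  · right
    rcases eq_or_lt_of_le (hpm x) with h2 | h2
    · exact h2
    · exfalso
      have := Real.logb_lt_logb (by norm_num : (1:ℝ) < 2) h h2
      rcases mul_eq_zero.mp hz with h3 | h3
      · exact (ne_of_gt h) h3
      · linarith

private lemma no_code (q : (Fin 4 → Fin 2) → Prop)
    (h : ∀ i j : Fin 4, i ≠ j → ∀ a b : Fin 2, ∃! x, q x ∧ x i = a ∧ x j = b) :
    False := by
  have K : ∀ (i j : Fin 4), i ≠ j → ∀ x y, q x → q y → x i = y i → x j = y j → x = y := by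
    intro i j hij x y qx qy hi hj
    obtain ⟨z, -, hz⟩ := h i j hij (y i) (y j)
    exact (hz x ⟨qx, hi, hj⟩).trans (hz y ⟨qy, rfl, rfl⟩).symm
  have hwex : ∀ a b : Fin 2, ∃ x, q x ∧ x 0 = a ∧ x 1 = b :=
    fun a b => (h 0 1 (by decide) a b).exists
  choose w hw using hwex
  have two : ∀ a b c : Fin 2, a ≠ b → b ≠ c → a = c := by decide
  have ne01 : (0 : Fin 2) ≠ 1 := by decide
  have step : ∀ (k : Fin 4), k = 2 ∨ k = 3 → ∀ a b a' b' : Fin 2,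
      (a = a' ∧ b ≠ b') ∨ (a ≠ a' ∧ b = b') → w a b k ≠ w a' b' k := by
    intro k hk a b a' b' hcase hgg
    rcases hcase with ⟨hae, hbn⟩ | ⟨han, hbe⟩
    · have heq := K 0 k (by rcases hk with h|h <;> subst h <;> decide)
        (w a b) (w a' b') (hw a b).1 (hw a' b').1
        (by rw [(hw a b).2.1, (hw a' b').2.1, hae]) hgg
      have := congrFun heq 1
      rw [(hw a b).2.2, (hw a' b').2.2] at this
      exact hbn this
    · have heq := K 1 k (by rcases hk with h|h <;> subst h <;> decide)
        (w a b) (w a' b') (hw a b).1 (hw a' b').1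
        (by rw [(hw a b).2.2, (hw a' b').2.2, hbe]) hgg
      have := congrFun heq 0
      rw [(hw a b).2.1, (hw a' b').2.1] at this
      exact han this
  have g2 : w 0 0 2 = w 1 1 2 :=
    two _ _ _ (step 2 (Or.inl rfl) 0 0 0 1 (Or.inl ⟨rfl, ne01⟩))
      (step 2 (Or.inl rfl) 0 1 1 1 (Or.inr ⟨ne01, rfl⟩))
  have g3 : w 0 0 3 = w 1 1 3 :=
    two _ _ _ (step 3 (Or.inr rfl) 0 0 0 1 (Or.inl ⟨rfl, ne01⟩))
      (step 3 (Or.inr rfl) 0 1 1 1 (Or.inr ⟨ne01, rfl⟩))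
  have heq := K 2 3 (by decide) (w 0 0) (w 1 1) (hw 0 0).1 (hw 1 1).1 g2 g3
  have := congrFun heq 0
  rw [(hw 0 0).2.1, (hw 1 1).2.1] at this
  exact ne01 this

private lemma entropy_marg_univ (μ : PMF (Fin 4 → Fin 2)) :
    shannonEntropy 2 (marg μ Finset.univ)
      = -∑ x, (μ x).toReal * Real.logb 2 ((μ x).toReal) := by
  classical
  let e : (Fin 4 → Fin 2) ≃ ({ i // i ∈ (Finset.univ : Finset (Fin 4)) } → Fin 2) :=
    { toFun := fun x k => x k.1
      invFun := fun y i => y ⟨i, Finset.mem_univ i⟩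
      left_inv := fun x => rfl
      right_inv := fun y => rfl }
  have happ : ∀ x, ((marg μ Finset.univ) (e x)).toReal = (μ x).toReal := fun x =>
    map_toReal_inj μ
      (f := fun x (k : { i // i ∈ (Finset.univ : Finset (Fin 4)) }) => x k.1)
      (fun x y h => funext fun i => congrFun h ⟨i, Finset.mem_univ i⟩) x
  rw [shannonEntropy,
    ← Equiv.sum_comp e (fun y => ((marg μ Finset.univ) y).toReal
      * Real.logb 2 ((marg μ Finset.univ) y).toReal)]
  exact congrArg Neg.neg (Finset.sum_congr rfl fun x _ => by rw [happ x])


/-- The uniform matroid `U_{2,4}` is not 2-entropic. -/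
theorem U24_not_two_entropic :
    ¬ ∃ μ : PMF (Fin 4 → Fin 2),
      (∀ i : Fin 4, shannonEntropy 2 (marg μ {i}) = 1) ∧
      (∀ i j : Fin 4, i ≠ j → shannonEntropy 2 (marg μ ({i, j} : Finset (Fin 4))) = 2) ∧
      shannonEntropy 2 (marg μ (Finset.univ : Finset (Fin 4))) = 2 := by
  classical
  rintro ⟨μ, -, hpair, hfull⟩
  set p : (Fin 4 → Fin 2) → ℝ := fun x => (μ x).toReal with hp
  have h0 : ∀ x, 0 ≤ p x := fun x => ENNReal.toReal_nonneg
  have hcard : ∀ i j : Fin 4, i ≠ j →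
      Fintype.card ({ k // k ∈ ({i, j} : Finset (Fin 4)) } → Fin 2) = 4 := by
    intro i j hij
    rw [Fintype.card_fun, Fintype.card_coe, Finset.card_pair hij, Fintype.card_fin]
    norm_num
  have hlogb4 : Real.logb 2 (4:ℝ) = 2 := by
    rw [show (4:ℝ) = 2^(2:ℕ) by norm_num, Real.logb_pow,
      Real.logb_self_eq_one (by norm_num)]
    norm_num
  have hunif : ∀ i j : Fin 4, i ≠ j →
      ∀ y, ((marg μ ({i, j} : Finset (Fin 4))) y).toReal = 1/4 := by
    intro i j hij
    have hH : -∑ y, ((marg μ ({i, j} : Finset (Fin 4))) y).toReal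
          * Real.logb 2 (((marg μ ({i, j} : Finset (Fin 4))) y).toReal)
        = Real.logb 2
            (Fintype.card ({ k // k ∈ ({i, j} : Finset (Fin 4)) } → Fin 2)) := by
      rw [hcard i j hij]
      push_cast
      rw [hlogb4]
      exact hpair i j hij
    intro y
    have hm := maxEnt _ (fun y => ENNReal.toReal_nonneg) (sum_toReal_pmf _) hH y
    rw [hm, hcard i j hij]
    norm_num
  have hmargval : ∀ (i j : Fin 4), i ≠ j →
      ∀ (y : { k // k ∈ ({i, j} : Finset (Fin 4)) } → Fin 2),
      ∑ x ∈ Finset.univ.filter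
          (fun x => (fun (k : { k // k ∈ ({i, j} : Finset (Fin 4)) }) => x k.1) = y),
        p x = 1/4 := by
    intro i j hij y
    rw [← map_toReal μ _ y]
    exact hunif i j hij y
  have hfullp : -∑ x, p x * Real.logb 2 (p x) = 2 := by
    rw [← entropy_marg_univ μ]
    exact hfull
  set π : (Fin 4 → Fin 2) → ({ k // k ∈ ({0, 1} : Finset (Fin 4)) } → Fin 2) :=
    fun x k => x k.1 with hπ
  have hgH : ∑ x, p x * Real.logb 2 (p x)
      = ∑ y, (∑ x ∈ Finset.univ.filter (fun x => π x = y), p x)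
          * Real.logb 2 (∑ x ∈ Finset.univ.filter (fun x => π x = y), p x) := by
    have e2 : ∀ y : { k // k ∈ ({0, 1} : Finset (Fin 4)) } → Fin 2,
        ∑ x ∈ Finset.univ.filter (fun x => π x = y), p x
          = ((marg μ ({0, 1} : Finset (Fin 4))) y).toReal :=
      fun y => (map_toReal μ _ y).symm
    have l : -∑ x, p x * Real.logb 2 (p x)
        = -∑ y, ((marg μ ({0, 1} : Finset (Fin 4))) y).toReal
            * Real.logb 2 (((marg μ ({0, 1} : Finset (Fin 4))) y).toReal) := by
      rw [hfullp]
      exact (hpair 0 1 (by decide)).symm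
    have l2 := neg_injective l
    rw [l2]
    exact Finset.sum_congr rfl fun y _ => by rw [e2 y]
  have hdich : ∀ x, p x = 0 ∨ p x = 1/4 := by
    intro x
    rcases grouping p π h0 hgH x with h | h
    · exact Or.inl h
    · right
      rw [h]
      exact hmargval 0 1 (by decide) (π x)
  have hEU : ∀ i j : Fin 4, i ≠ j → ∀ a b : Fin 2,
      ∃! x, (p x = 1/4) ∧ x i = a ∧ x j = b := by
    intro i j hij a b
    set y : { k // k ∈ ({i, j} : Finset (Fin 4)) } → Fin 2 :=
      fun k => if k.1 = i then a else b with hy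
    have hmem : ∀ x : Fin 4 → Fin 2,
        ((fun (k : { k // k ∈ ({i, j} : Finset (Fin 4)) }) => x k.1) = y)
          ↔ (x i = a ∧ x j = b) := by
      intro x
      constructor
      · intro h
        constructor
        · have h1 := congrFun h ⟨i, by simp⟩
          simpa [hy] using h1
        · have h2 := congrFun h ⟨j, by simp⟩
          simpa [hy, Ne.symm hij] using h2
      · rintro ⟨h1, h2⟩
        funext k
        have hk := k.2
        simp only [Finset.mem_insert, Finset.mem_singleton] at hk
        rcases hk with hk | hk
        · simp [hy, hk, h1]
        · simp [hy, hk, Ne.symm hij, h2]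
    have hsum : ∑ x ∈ Finset.univ.filter (fun x => x i = a ∧ x j = b), p x = 1/4 := by
      rw [← hmargval i j hij y]
      apply Finset.sum_congr _ (fun _ _ => rfl)
      ext x
      simp only [Finset.mem_filter, Finset.mem_univ, true_and]
      exact (hmem x).symm
    obtain ⟨x0, hx0mem, hx0ne⟩ :=
      Finset.exists_ne_zero_of_sum_ne_zero (by rw [hsum]; norm_num :
        ∑ x ∈ Finset.univ.filter (fun x => x i = a ∧ x j = b), p x ≠ 0)
    have hx0 : p x0 = 1/4 := (hdich x0).resolve_left hx0ne
    rw [Finset.mem_filter] at hx0mem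
    refine ⟨x0, ⟨hx0, hx0mem.2⟩, ?_⟩
    rintro z ⟨hz14, hzi, hzj⟩
    by_contra hne
    have hsub : ({z, x0} : Finset (Fin 4 → Fin 2))
        ⊆ Finset.univ.filter (fun x => x i = a ∧ x j = b) := by
      intro t ht
      simp only [Finset.mem_insert, Finset.mem_singleton] at ht
      rcases ht with rfl | rfl
      · exact Finset.mem_filter.mpr ⟨Finset.mem_univ _, hzi, hzj⟩
      · exact Finset.mem_filter.mpr ⟨Finset.mem_univ _, hx0mem.2⟩
    have hle := Finset.sum_le_sum_of_subset_of_nonneg hsub (fun t _ _ => h0 t)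
    rw [Finset.sum_pair hne, hsum, hz14, hx0] at hle
    norm_num at hle
  exact no_code (fun x => p x = 1/4) hEU
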